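/- Let X and Y be Polish spaces, c : X × Y → [0,∞] lower semicontinuous, μ a probability measure on X and ν a probability measure on Y. Suppose that for every optimal coupling γ of μ and ν for the cost c (i.e., every γ with marginals μ, ν minimizing ∫ c dγ) there exists a measurable map T_γ : X → Y such that the support of γ is contained in the graph {(x, T_γ(x)) : x ∈ supp μ}. Then the optimal coupling γ is unique, and there is a unique (μ-a.e.) measurable map T with γ = (Id × T)_* μ. -/

import Mathlib

open MeasureTheory ENNReal

noncomputable section

def IsCoupling {X Y : Type*} [MeasurableSpace X] [MeasurableSpace Y]
    (μ : Measure X) (ν : Measure Y) (γ : Measure (X × Y)) : Prop :=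
  γ.map Prod.fst = μ ∧ γ.map Prod.snd = ν

noncomputable def MKCost {X Y : Type*} [MeasurableSpace X] [MeasurableSpace Y]
    (c : X × Y → ℝ≥0∞) (μ : Measure X) (ν : Measure Y) : ℝ≥0∞ :=
  ⨅ γ ∈ {γ : Measure (X × Y) | IsCoupling μ ν γ}, ∫⁻ p, c p ∂γ

def IsOptimalCoupling {X Y : Type*} [MeasurableSpace X] [MeasurableSpace Y]
    (c : X × Y → ℝ≥0∞) (μ : Measure X) (ν : Measure Y) (γ : Measure (X × Y)) : Prop :=
  IsCoupling μ ν γ ∧ ∫⁻ p, c p ∂γ = MKCost c μ ν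

/-- The topological support of a measure: the set of points all of whose open
neighbourhoods have positive measure. -/
def msupport {X : Type*} [MeasurableSpace X] [TopologicalSpace X] (μ : Measure X) : Set X :=
  {x | ∀ U : Set X, IsOpen U → x ∈ U → μ U ≠ 0}


section UOCAuxSect
open Filter Set TopologicalSpace Topology
open scoped NNReal

noncomputable section

namespace UOCAux

/-- Limit along an ultrafilter, in `ℝ≥0∞`. -/
noncomputable def ulim (𝒰 : Ultrafilter ℕ) (f : ℕ → ℝ≥0∞) : ℝ≥0∞ :=
  (𝒰.map f).lim

lemma tendsto_ulim (𝒰 : Ultrafilter ℕ) (f : ℕ → ℝ≥0∞) :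
    Tendsto f ↑𝒰 (𝓝 (ulim 𝒰 f)) := by
  have h := Ultrafilter.le_nhds_lim (𝒰.map f)
  rwa [Ultrafilter.coe_map] at h

lemma ulim_eq {𝒰 : Ultrafilter ℕ} {f : ℕ → ℝ≥0∞} {a : ℝ≥0∞}
    (h : Tendsto f ↑𝒰 (𝓝 a)) : ulim 𝒰 f = a :=
  tendsto_nhds_unique (tendsto_ulim 𝒰 f) h

lemma ulim_const (𝒰 : Ultrafilter ℕ) (a : ℝ≥0∞) : ulim 𝒰 (fun _ => a) = a :=
  ulim_eq tendsto_const_nhds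

lemma ulim_mono {𝒰 : Ultrafilter ℕ} {f g : ℕ → ℝ≥0∞} (h : ∀ n, f n ≤ g n) :
    ulim 𝒰 f ≤ ulim 𝒰 g :=
  le_of_tendsto_of_tendsto' (tendsto_ulim 𝒰 f) (tendsto_ulim 𝒰 g) h

lemma ulim_add (𝒰 : Ultrafilter ℕ) (f g : ℕ → ℝ≥0∞) :
    ulim 𝒰 (fun n => f n + g n) = ulim 𝒰 f + ulim 𝒰 g :=
  ulim_eq ((tendsto_ulim 𝒰 f).add (tendsto_ulim 𝒰 g))

lemma ulim_finset_sum (𝒰 : Ultrafilter ℕ) {ι : Type*} (s : Finset ι) (f : ι → ℕ → ℝ≥0∞) :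
    ulim 𝒰 (fun n => ∑ i ∈ s, f i n) = ∑ i ∈ s, ulim 𝒰 (f i) :=
  ulim_eq (tendsto_finset_sum s (fun i _ => tendsto_ulim 𝒰 (f i)))

lemma ulim_const_mul (𝒰 : Ultrafilter ℕ) {a : ℝ≥0∞} (ha : a ≠ ⊤) (f : ℕ → ℝ≥0∞) :
    ulim 𝒰 (fun n => a * f n) = a * ulim 𝒰 f :=
  ulim_eq (ENNReal.Tendsto.const_mul (tendsto_ulim 𝒰 f) (Or.inr ha))

end UOCAux

end

noncomputable section
namespace UOCAux

/-- Ulam tightness: a finite measure on a Polish space is tight. -/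
lemma exists_isCompact_measure_compl_le
    {Z : Type*} [MeasurableSpace Z] [TopologicalSpace Z] [PolishSpace Z] [BorelSpace Z]
    (m : Measure Z) [IsFiniteMeasure m] {ε : ℝ≥0∞} (hε : ε ≠ 0) :
    ∃ K : Set Z, IsCompact K ∧ m Kᶜ ≤ ε := by
  letI := upgradeIsCompletelyMetrizable Z
  rcases isEmpty_or_nonempty Z with hZ | hZ
  · refine ⟨∅, isCompact_empty, ?_⟩
    have : (∅ : Set Z)ᶜ = (∅ : Set Z) := by
      simp [Set.eq_empty_of_isEmpty]
    rw [this]; simp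
  obtain ⟨u, hu⟩ := TopologicalSpace.exists_dense_seq Z
  -- for each n, a finite union of closed balls of radius 1/(n+1) with small complement
  have key : ∀ n : ℕ, ∃ M : ℕ,
      m (⋃ i ∈ Finset.range M, Metric.closedBall (u i) (1 / (n + 1)))ᶜ ≤ ε / 2 ^ (n + 1) := by
    intro n
    set s : ℕ → Set Z := fun M => ⋃ i ∈ Finset.range M, Metric.closedBall (u i) (1 / (n + 1))
      with hs
    have hmono : Monotone s := fun a b hab => Set.biUnion_subset_biUnion_left
      (fun i hi => Finset.mem_range.2 (lt_of_lt_of_le (Finset.mem_range.1 hi) hab))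
    have hclosed : ∀ M, IsClosed (s M) := fun M =>
      Set.Finite.isClosed_biUnion (Finset.finite_toSet _) (fun i _ => Metric.isClosed_closedBall)
    have hunion : ⋃ M, s M = Set.univ := by
      apply Set.eq_univ_of_forall
      intro x
      obtain ⟨i, hi⟩ := hu.exists_dist_lt x (by positivity : (0:ℝ) < 1 / (n + 1))
      exact Set.mem_iUnion.2 ⟨i + 1, Set.mem_biUnion (Finset.mem_range.2 (Nat.lt_succ_self i))
        (Metric.mem_closedBall.2 hi.le)⟩
    have htend : Tendsto (fun M => m (s M)) atTop (𝓝 (m Set.univ)) := by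
      have := tendsto_measure_iUnion_atTop (μ := m) hmono
      rwa [hunion] at this
    set δ : ℝ≥0∞ := ε / 2 ^ (n + 1) with hδ
    have hδ0 : δ ≠ 0 := by
      simp only [hδ, ne_eq, ENNReal.div_eq_zero_iff, not_or]
      exact ⟨hε, ENNReal.pow_ne_top (by simp)⟩
    have hlt : m Set.univ < m Set.univ + δ :=
      ENNReal.lt_add_right (measure_ne_top m _) hδ0
    have hev : ∀ᶠ M in atTop, m Set.univ < m (s M) + δ := by
      have h2 : Tendsto (fun M => m (s M) + δ) atTop (𝓝 (m Set.univ + δ)) :=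
        htend.add tendsto_const_nhds
      exact h2.eventually (eventually_gt_nhds hlt)
    obtain ⟨M, hM⟩ := hev.exists
    refine ⟨M, ?_⟩
    rw [measure_compl (hclosed M).measurableSet (measure_ne_top m _)]
    exact tsub_le_iff_right.2 (by rw [add_comm]; exact hM.le)
  choose Mf hMf using key
  set K : Set Z := ⋂ n, ⋃ i ∈ Finset.range (Mf n), Metric.closedBall (u i) (1 / (n + 1)) with hK
  have hKc : IsCompact K := by
    apply TotallyBounded.isCompact_of_isClosed
    · rw [Metric.totallyBounded_iff]
      intro r hr
      obtain ⟨n, hn⟩ := exists_nat_one_div_lt hr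
      refine ⟨u '' (Finset.range (Mf n) : Set ℕ), (Finset.finite_toSet _).image _, ?_⟩
      intro x hx
      have hx' : x ∈ ⋃ i ∈ Finset.range (Mf n), Metric.closedBall (u i) (1 / (n + 1)) :=
        Set.mem_iInter.1 hx n
      obtain ⟨i, hi, hxi⟩ := Set.mem_iUnion₂.1 hx'
      exact Set.mem_iUnion₂.2 ⟨u i, Set.mem_image_of_mem _ hi,
        Metric.closedBall_subset_ball hn hxi⟩
    · exact isClosed_iInter fun n => Set.Finite.isClosed_biUnion (Finset.finite_toSet _)
        (fun i _ => Metric.isClosed_closedBall)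
  refine ⟨K, hKc, ?_⟩
  have hcompl : Kᶜ = ⋃ n, (⋃ i ∈ Finset.range (Mf n), Metric.closedBall (u i) (1 / (n + 1)))ᶜ := by
    rw [hK, Set.compl_iInter]
  rw [hcompl]
  refine (measure_iUnion_le _).trans ?_
  calc ∑' n, m (⋃ i ∈ Finset.range (Mf n), Metric.closedBall (u i) (1 / (n + 1)))ᶜ
      ≤ ∑' n, ε / 2 ^ (n + 1) := ENNReal.tsum_le_tsum fun n => hMf n
    _ ≤ ε := by
        have : ∀ n : ℕ, ε / 2 ^ (n + 1) = ε * 2⁻¹ * 2⁻¹ ^ n := by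
          intro n
          rw [div_eq_mul_inv, pow_succ, ENNReal.mul_inv (by simp) (by simp),
            ← ENNReal.inv_pow]
          ring
        simp_rw [this]
        rw [ENNReal.tsum_mul_left, ENNReal.tsum_geometric, mul_assoc]
        rw [ENNReal.one_sub_inv_two]
        calc ε * (2⁻¹ * 2⁻¹⁻¹) ≤ ε * 1 := by
              gcongr
              rw [ENNReal.mul_inv_cancel] <;> simp
          _ = ε := mul_one ε
end UOCAux
end

noncomputable section

namespace UOCAux

lemma measure_msupport_compl {Z : Type*} [MeasurableSpace Z] [TopologicalSpace Z]
    [SecondCountableTopology Z] (m : Measure Z) : m (msupport m)ᶜ = 0 := by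
  have hcompl : (msupport m)ᶜ = ⋃₀ {U : Set Z | IsOpen U ∧ m U = 0} := by
    ext x
    simp only [msupport, Set.mem_compl_iff, Set.mem_setOf_eq, Set.mem_sUnion]
    push_neg
    constructor
    · rintro ⟨U, hU, hxU, hm⟩; exact ⟨U, ⟨hU, hm⟩, hxU⟩
    · rintro ⟨U, ⟨hU, hm⟩, hxU⟩; exact ⟨U, hU, hxU, hm⟩
  obtain ⟨T, hTc, hTS, hT⟩ := TopologicalSpace.isOpen_sUnion_countable
    {U : Set Z | IsOpen U ∧ m U = 0} (fun s hs => hs.1)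
  rw [hcompl, ← hT]
  exact (measure_sUnion_null_iff hTc).2 fun s hs => (hTS hs).2

/-- A finite measure concentrated on the graph of a measurable map, with first marginal `μ`,
equals the pushforward of `μ` by `x ↦ (x, T x)`. -/
lemma eq_map_of_graph {X Y : Type*} [MeasurableSpace X] [MeasurableSpace Y]
    {μ : Measure X} {γ : Measure (X × Y)} [IsFiniteMeasure γ]
    (hfst : γ.map Prod.fst = μ) {T : X → Y} (hT : Measurable T)
    (hnull : γ {p : X × Y | p.2 ≠ T p.1} = 0) :
    γ = μ.map (fun x => (x, T x)) := by
  have hpair : Measurable fun x : X => (x, T x) := measurable_id.prodMk hT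
  have hμγ : ∀ s : Set X, MeasurableSet s → γ (Prod.fst ⁻¹' s) = μ s := by
    intro s hs
    rw [← hfst, Measure.map_apply measurable_fst hs]
  refine MeasureTheory.ext_of_generate_finite _ generateFrom_prod.symm isPiSystem_prod ?_ ?_
  · rintro s ⟨A, hA, B, hB, rfl⟩
    simp only [Set.mem_setOf_eq] at hA hB
    have h1 : (A ×ˢ B : Set (X × Y)) =ᵐ[γ] Prod.fst ⁻¹' (A ∩ T ⁻¹' B) := by
      rw [Filter.eventuallyEq_set]
      filter_upwards [measure_eq_zero_iff_ae_notMem.1 hnull] with p hp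
      simp only [Set.mem_setOf_eq, not_not] at hp
      simp [Set.mem_prod, hp]
    have h2 : (fun x : X => (x, T x)) ⁻¹' (A ×ˢ B) = A ∩ T ⁻¹' B := by
      ext x; simp
    rw [measure_congr h1, hμγ _ (hA.inter (hT hB)),
      Measure.map_apply hpair (hA.prod hB), h2]
  · rw [Measure.map_apply hpair MeasurableSet.univ]
    simpa using hμγ Set.univ MeasurableSet.univ

/-- Two finite measures, one outer regular, comparable on opens with equal total mass,
are equal. -/
lemma measure_eq_of_le_open {Z : Type*} [MeasurableSpace Z] [TopologicalSpace Z]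
    [OpensMeasurableSpace Z] (α β : Measure Z) [IsFiniteMeasure α] [IsFiniteMeasure β]
    [β.OuterRegular] (hopen : ∀ U : Set Z, IsOpen U → α U ≤ β U)
    (huniv : α Set.univ = β Set.univ) : α = β := by
  have hle : ∀ A : Set Z, MeasurableSet A → α A ≤ β A := by
    intro A hA
    by_contra hcon
    push_neg at hcon
    obtain ⟨U, hAU, hUo, hU⟩ := MeasureTheory.Measure.OuterRegular.outerRegular hA (α A) hcon
    exact absurd ((measure_mono hAU).trans (hopen U hUo)) (not_le.2 hU)
  ext A hA
  refine le_antisymm (hle A hA) ?_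
  have h1 : β Aᶜᶜ = β Set.univ - β Aᶜ := measure_compl hA.compl (measure_ne_top β _)
  have h2 : α Aᶜᶜ = α Set.univ - α Aᶜ := measure_compl hA.compl (measure_ne_top α _)
  rw [compl_compl] at h1 h2
  rw [h1, h2, ← huniv]
  exact tsub_le_tsub le_rfl (hle Aᶜ hA.compl)

end UOCAux
end

noncomputable section
namespace UOCAux

variable {Z : Type*}

/-- Open superlevel set used in the approximation of an l.s.c. function. -/
def Uset [TopologicalSpace Z] (c : Z → ℝ≥0∞) (n i : ℕ) : Set Z :=
  c ⁻¹' Set.Ioi ((i : ℝ≥0∞) / ((n : ℝ≥0∞) + 1))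

/-- Simple approximations from below of an l.s.c. function, built from open sets. -/
def sfun [TopologicalSpace Z] (c : Z → ℝ≥0∞) (n : ℕ) (z : Z) : ℝ≥0∞ :=
  ∑ i ∈ Finset.Icc 1 ((n + 1) * (n + 1)),
    ((n : ℝ≥0∞) + 1)⁻¹ * (Uset c n i).indicator 1 z

variable [TopologicalSpace Z] {c : Z → ℝ≥0∞}

lemma isOpen_Uset (hc : LowerSemicontinuous c) (n i : ℕ) : IsOpen (Uset c n i) :=
  lowerSemicontinuous_iff_isOpen_preimage.1 hc _

open scoped Classical in
lemma sfun_eq_card (n : ℕ) (z : Z) :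
    sfun c n z = (((Finset.Icc 1 ((n + 1) * (n + 1))).filter
      (fun i => z ∈ Uset c n i)).card : ℝ≥0∞) * ((n : ℝ≥0∞) + 1)⁻¹ := by
  classical
  simp only [sfun, Set.indicator_apply, Pi.one_apply, mul_ite, mul_one, mul_zero]
  rw [← Finset.sum_filter, Finset.sum_const, nsmul_eq_mul]

lemma sfun_le (n : ℕ) (z : Z) : sfun c n z ≤ c z := by
  classical
  rw [sfun_eq_card]
  set T := (Finset.Icc 1 ((n + 1) * (n + 1))).filter (fun i => z ∈ Uset c n i) with hT
  rcases T.eq_empty_or_nonempty with he | hne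
  · simp [he]
  · set M := T.max' hne with hM
    have hMT : M ∈ T := T.max'_mem hne
    have hM2 : (M : ℝ≥0∞) / ((n : ℝ≥0∞) + 1) < c z := (Finset.mem_filter.1 hMT).2
    have hsub : T ⊆ Finset.Icc 1 M := fun i hi => Finset.mem_Icc.2
      ⟨(Finset.mem_Icc.1 (Finset.mem_filter.1 hi).1).1, T.le_max' i hi⟩
    have hcard : T.card ≤ M := by
      have := Finset.card_le_card hsub
      rwa [Nat.card_Icc, Nat.add_sub_cancel] at this
    calc (T.card : ℝ≥0∞) * ((n : ℝ≥0∞) + 1)⁻¹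
        ≤ (M : ℝ≥0∞) * ((n : ℝ≥0∞) + 1)⁻¹ := mul_le_mul_left (Nat.cast_le.2 hcard) _
      _ = (M : ℝ≥0∞) / ((n : ℝ≥0∞) + 1) := (div_eq_mul_inv _ _).symm
      _ ≤ c z := hM2.le

lemma le_liminf_sfun (z : Z) : c z ≤ Filter.liminf (fun n => sfun c n z) Filter.atTop := by
  classical
  apply ENNReal.le_of_forall_nnreal_lt
  intro t ht
  have hinv : Tendsto (fun n : ℕ => ((n : ℝ≥0∞) + 1)⁻¹) atTop (𝓝 0) := by
    have h1 : Tendsto (fun m : ℕ => ((m : ℝ≥0∞))⁻¹) atTop (𝓝 0) :=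
      ENNReal.tendsto_inv_nat_nhds_zero
    have h2 := h1.comp (tendsto_add_atTop_nat 1)
    have heq : (fun n : ℕ => ((n : ℝ≥0∞) + 1)⁻¹)
        = (fun m : ℕ => ((m : ℝ≥0∞))⁻¹) ∘ (fun n : ℕ => n + 1) := by
      funext n
      simp [Function.comp, Nat.cast_add]
    rw [heq]
    exact h2
  have hlim : Tendsto (fun n : ℕ => (t : ℝ≥0∞) - ((n : ℝ≥0∞) + 1)⁻¹) atTop (𝓝 (t : ℝ≥0∞)) := by
    have := ENNReal.Tendsto.sub (tendsto_const_nhds (x := (t : ℝ≥0∞)) (f := atTop)) hinv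
      (Or.inl coe_ne_top)
    simpa using this
  have hev : ∀ᶠ n : ℕ in atTop, (t : ℝ≥0∞) - ((n : ℝ≥0∞) + 1)⁻¹ ≤ sfun c n z := by
    filter_upwards [eventually_ge_atTop ⌈t⌉₊] with n hn
    set N := (n + 1) * (n + 1) with hN
    set k := ⌊(t * ((n : ℝ≥0) + 1) : ℝ≥0)⌋₊ with hk
    have hfl1 : (k : ℝ≥0) ≤ t * ((n : ℝ≥0) + 1) := hk ▸ Nat.floor_le zero_le
    have hfl2 : t * ((n : ℝ≥0) + 1) < (k : ℝ≥0) + 1 := by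
      rw [hk]; exact Nat.lt_floor_add_one _
    have htn : (t : ℝ≥0) ≤ (n : ℝ≥0) + 1 := by
      calc (t : ℝ≥0) ≤ (⌈t⌉₊ : ℝ≥0) := Nat.le_ceil t
        _ ≤ (n : ℝ≥0) := by exact_mod_cast hn
        _ ≤ (n : ℝ≥0) + 1 := le_self_add
    have hkN : k ≤ N := by
      have h1 : (t * ((n : ℝ≥0) + 1) : ℝ≥0) ≤ ((N : ℝ≥0)) := by
        have : ((N : ℝ≥0)) = ((n : ℝ≥0) + 1) * ((n : ℝ≥0) + 1) := by
          rw [hN]; push_cast; ring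
        rw [this]
        exact mul_le_mul htn le_rfl zero_le zero_le
      calc k ≤ ⌊(N : ℝ≥0)⌋₊ := Nat.floor_le_floor h1
        _ = N := Nat.floor_natCast N
    -- Icc 1 k is inside the filtered set
    have hsubset : Finset.Icc 1 k ⊆ (Finset.Icc 1 N).filter (fun i => z ∈ Uset c n i) := by
      intro i hi
      obtain ⟨hi1, hik⟩ := Finset.mem_Icc.1 hi
      refine Finset.mem_filter.2 ⟨Finset.mem_Icc.2 ⟨hi1, hik.trans hkN⟩, ?_⟩
      have hile : (i : ℝ≥0) ≤ t * ((n : ℝ≥0) + 1) := by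
        calc (i : ℝ≥0) ≤ (k : ℝ≥0) := Nat.cast_le.2 hik
          _ ≤ t * ((n : ℝ≥0) + 1) := hfl1
      have hdiv : (i : ℝ≥0∞) / ((n : ℝ≥0∞) + 1) ≤ (t : ℝ≥0∞) := by
        rw [ENNReal.div_le_iff (by simp [add_eq_zero]) (by simp)]
        calc (i : ℝ≥0∞) ≤ ((t * ((n : ℝ≥0) + 1) : ℝ≥0) : ℝ≥0∞) := by exact_mod_cast hile
          _ = (t : ℝ≥0∞) * ((n : ℝ≥0∞) + 1) := by push_cast; ring
      exact Set.mem_preimage.2 (Set.mem_Ioi.2 (lt_of_le_of_lt hdiv ht))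
    have hcard : k ≤ ((Finset.Icc 1 N).filter (fun i => z ∈ Uset c n i)).card := by
      have := Finset.card_le_card hsubset
      rwa [Nat.card_Icc, Nat.add_sub_cancel] at this
    -- conclude
    have hkey : (t : ℝ≥0∞) ≤ ((k : ℝ≥0∞) + 1) / ((n : ℝ≥0∞) + 1) := by
      rw [ENNReal.le_div_iff_mul_le (Or.inl (by simp [add_eq_zero])) (Or.inl (by simp))]
      calc (t : ℝ≥0∞) * ((n : ℝ≥0∞) + 1)
          = ((t * ((n : ℝ≥0) + 1) : ℝ≥0) : ℝ≥0∞) := by push_cast; ring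
        _ ≤ (k : ℝ≥0∞) + 1 := by exact_mod_cast hfl2.le
    calc (t : ℝ≥0∞) - ((n : ℝ≥0∞) + 1)⁻¹
        ≤ ((k : ℝ≥0∞) + 1) / ((n : ℝ≥0∞) + 1) - ((n : ℝ≥0∞) + 1)⁻¹ :=
          tsub_le_tsub hkey le_rfl
      _ = (k : ℝ≥0∞) / ((n : ℝ≥0∞) + 1) := by
          rw [← ENNReal.div_add_div_same, ← one_div]
          exact ENNReal.add_sub_cancel_right (by
            simp [ENNReal.div_eq_top])
      _ = (k : ℝ≥0∞) * ((n : ℝ≥0∞) + 1)⁻¹ := div_eq_mul_inv _ _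
      _ ≤ _ := by
          rw [sfun_eq_card]
          exact mul_le_mul_left (Nat.cast_le.2 hcard) _
  calc (t : ℝ≥0∞) = liminf (fun n : ℕ => (t : ℝ≥0∞) - ((n : ℝ≥0∞) + 1)⁻¹) atTop :=
        (hlim.liminf_eq).symm
    _ ≤ liminf (fun n => sfun c n z) atTop := liminf_le_liminf hev

lemma measurable_sfun [MeasurableSpace Z] [OpensMeasurableSpace Z]
    (hc : LowerSemicontinuous c) (n : ℕ) : Measurable (sfun c n) := by
  apply Finset.measurable_sum
  intro i _
  exact (measurable_one.indicator (isOpen_Uset hc n i).measurableSet).const_mul _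

lemma lintegral_sfun [MeasurableSpace Z] [OpensMeasurableSpace Z]
    (hc : LowerSemicontinuous c) (ρ : Measure Z) (n : ℕ) :
    ∫⁻ z, sfun c n z ∂ρ = ∑ i ∈ Finset.Icc 1 ((n + 1) * (n + 1)),
      ((n : ℝ≥0∞) + 1)⁻¹ * ρ (Uset c n i) := by
  simp only [sfun]
  rw [lintegral_finset_sum _ (fun i _ =>
    (measurable_one.indicator (isOpen_Uset hc n i).measurableSet).const_mul _)]
  refine Finset.sum_congr rfl fun i _ => ?_
  rw [lintegral_const_mul _ (measurable_one.indicator (isOpen_Uset hc n i).measurableSet),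
    lintegral_indicator (isOpen_Uset hc n i).measurableSet]
  simp

end UOCAux
end

noncomputable section

namespace UOCAux

lemma isProbabilityMeasure_of_coupling {X Y : Type*} [MeasurableSpace X] [MeasurableSpace Y]
    {μ : Measure X} {ν : Measure Y} [IsProbabilityMeasure μ] {γ : Measure (X × Y)}
    (h : IsCoupling μ ν γ) : IsProbabilityMeasure γ := by
  constructor
  have h1 := congrArg (fun m : Measure X => m Set.univ) h.1
  simp only [Measure.map_apply measurable_fst MeasurableSet.univ, Set.preimage_univ] at h1
  rw [h1, measure_univ]

/-- Existence of an optimal coupling for a l.s.c. cost on Polish spaces. -/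
theorem exists_optimal_coupling
    {X Y : Type*} [MeasurableSpace X] [TopologicalSpace X] [PolishSpace X] [BorelSpace X]
    [MeasurableSpace Y] [TopologicalSpace Y] [PolishSpace Y] [BorelSpace Y]
    (c : X × Y → ℝ≥0∞) (hc : LowerSemicontinuous c)
    (μ : Measure X) (ν : Measure Y)
    [IsProbabilityMeasure μ] [IsProbabilityMeasure ν] :
    ∃ γ : Measure (X × Y), IsOptimalCoupling c μ ν γ := by
  classical
  set S := {γ : Measure (X × Y) | IsCoupling μ ν γ} with hS
  have hSne : S.Nonempty := by
    refine ⟨μ.prod ν, ?_, ?_⟩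
    · rw [Measure.map_fst_prod, measure_univ, one_smul]
    · rw [Measure.map_snd_prod, measure_univ, one_smul]
  set Jfn : Measure (X × Y) → ℝ≥0∞ := fun γ => ∫⁻ p, c p ∂γ with hJfn
  have hMK : MKCost c μ ν = sInf (Jfn '' S) := by
    rw [MKCost, sInf_image]
  obtain ⟨u, -, hutend, humem⟩ := exists_seq_tendsto_sInf (hSne.image Jfn)
    (OrderBot.bddBelow _)
  choose γseq hγseqS hγseqJ using fun n => (Set.mem_image _ _ _).1 (humem n)
  have hγprob : ∀ n, IsProbabilityMeasure (γseq n) := fun n =>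
    isProbabilityMeasure_of_coupling (hγseqS n)
  have htendJ : Tendsto (fun n => ∫⁻ p, c p ∂(γseq n)) atTop (𝓝 (MKCost c μ ν)) := by
    rw [hMK]
    have : (fun n => ∫⁻ p, c p ∂(γseq n)) = u := funext fun n => hγseqJ n
    rw [this]
    exact hutend
  -- the ultrafilter limit functional
  set 𝒰 : Ultrafilter ℕ := Ultrafilter.of atTop with h𝒰
  have h𝒰le : (𝒰 : Filter ℕ) ≤ atTop := Ultrafilter.of_le atTop
  set φ : Set (X × Y) → ℝ≥0∞ := fun A => ulim 𝒰 (fun n => γseq n A) with hφ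
  have hφuniv : φ Set.univ = 1 := by
    rw [hφ]
    simp only
    have : (fun n => γseq n Set.univ) = fun _ => (1 : ℝ≥0∞) := by
      funext n
      haveI := hγprob n
      exact measure_univ
    rw [this, ulim_const]
  have hφmono : ∀ {A B : Set (X × Y)}, A ⊆ B → φ A ≤ φ B := fun hAB =>
    ulim_mono fun n => measure_mono hAB
  have hφle_one : ∀ A, φ A ≤ 1 := fun A => le_trans (hφmono (Set.subset_univ A)) hφuniv.le
  -- inf over open neighbourhoods of compacts
  set lamE : Set (X × Y) → ℝ≥0∞ :=
    fun K => ⨅ (U : Set (X × Y)) (_ : IsOpen U) (_ : K ⊆ U), φ U with hlamE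
  have lamE_le : ∀ {K U : Set (X × Y)}, IsOpen U → K ⊆ U → lamE K ≤ φ U :=
    fun hU hKU => iInf_le_of_le _ (iInf_le_of_le hU (iInf_le _ hKU))
  have le_lamE : ∀ {x : ℝ≥0∞} {K : Set (X × Y)},
      (∀ U : Set (X × Y), IsOpen U → K ⊆ U → x ≤ φ U) → x ≤ lamE K :=
    fun h => le_iInf fun U => le_iInf fun hU => le_iInf fun hKU => h U hU hKU
  have lamE_lt : ∀ {K : Set (X × Y)} {b : ℝ≥0∞}, lamE K < b →
      ∃ U : Set (X × Y), IsOpen U ∧ K ⊆ U ∧ φ U < b := by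
    intro K b h
    rw [hlamE] at h
    simp only [iInf_lt_iff] at h
    obtain ⟨U, hU, hKU, hφU⟩ := h
    exact ⟨U, hU, hKU, hφU⟩
  have lamE_ne_top : ∀ K, lamE K ≠ ⊤ :=
    fun K => ((lamE_le isOpen_univ (Set.subset_univ K)).trans (hφle_one _)).trans_lt
      (by norm_num) |>.ne
  -- the content
  set Λ : Content (X × Y) :=
    { toFun := fun K => (lamE ↑K).toNNReal
      mono' := by
        intro K₁ K₂ h
        have h2 : lamE ↑K₁ ≤ lamE ↑K₂ :=
          le_lamE fun U hU hKU => lamE_le hU (Set.Subset.trans h hKU)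
        exact ENNReal.toNNReal_mono (lamE_ne_top _) h2
      sup_disjoint' := by
        intro K₁ K₂ hdisj _ _
        obtain ⟨W₁, W₂, hW₁, hW₂, hKW₁, hKW₂, hWdisj⟩ :=
          SeparatedNhds.of_isCompact_isCompact K₁.2 K₂.2 hdisj
        have heq : lamE (↑K₁ ∪ ↑K₂) = lamE ↑K₁ + lamE ↑K₂ := by
          apply le_antisymm
          · -- subadditivity via epsilon
            apply ENNReal.le_of_forall_pos_le_add
            intro ε hε _
            have hε2 : ((ε : ℝ≥0∞) / 2) ≠ 0 := by
              simp [ENNReal.div_eq_zero_iff, hε.ne']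
            obtain ⟨U₁, hU₁, hKU₁, hφ₁⟩ := lamE_lt
              (ENNReal.lt_add_right (lamE_ne_top ↑K₁) hε2)
            obtain ⟨U₂, hU₂, hKU₂, hφ₂⟩ := lamE_lt
              (ENNReal.lt_add_right (lamE_ne_top ↑K₂) hε2)
            have hsub : lamE (↑K₁ ∪ ↑K₂) ≤ φ U₁ + φ U₂ := by
              refine (lamE_le (hU₁.union hU₂) (Set.union_subset_union hKU₁ hKU₂)).trans ?_
              rw [hφ]
              simp only
              rw [← ulim_add]
              exact ulim_mono fun n => measure_union_le _ _
            calc lamE (↑K₁ ∪ ↑K₂) ≤ φ U₁ + φ U₂ := hsub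
              _ ≤ (lamE ↑K₁ + ε / 2) + (lamE ↑K₂ + ε / 2) := add_le_add hφ₁.le hφ₂.le
              _ = lamE ↑K₁ + lamE ↑K₂ + ε := by
                  rw [add_add_add_comm, ENNReal.add_halves]
          · -- superadditivity via separation
            apply le_lamE
            intro U hU hKU
            have h1 : lamE ↑K₁ ≤ φ (U ∩ W₁) :=
              lamE_le (hU.inter hW₁) (Set.subset_inter ((Set.subset_union_left).trans hKU) hKW₁)
            have h2 : lamE ↑K₂ ≤ φ (U ∩ W₂) :=
              lamE_le (hU.inter hW₂) (Set.subset_inter ((Set.subset_union_right).trans hKU) hKW₂)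
            calc lamE ↑K₁ + lamE ↑K₂ ≤ φ (U ∩ W₁) + φ (U ∩ W₂) := add_le_add h1 h2
              _ = ulim 𝒰 fun n => γseq n (U ∩ W₁) + γseq n (U ∩ W₂) := (ulim_add _ _ _).symm
              _ = ulim 𝒰 fun n => γseq n ((U ∩ W₁) ∪ (U ∩ W₂)) := by
                  congr 1
                  funext n
                  rw [measure_union (hWdisj.mono Set.inter_subset_right Set.inter_subset_right)
                    (hU.inter hW₂).measurableSet]
              _ ≤ φ U := ulim_mono fun n => measure_mono
                  (Set.union_subset Set.inter_subset_left Set.inter_subset_left)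
        show ((lamE _).toNNReal) = (lamE _).toNNReal + (lamE _).toNNReal
        rw [Compacts.coe_sup] at *
        rw [heq, ENNReal.toNNReal_add (lamE_ne_top _) (lamE_ne_top _)]
      sup_le' := by
        intro K₁ K₂
        have heq : lamE (↑K₁ ∪ ↑K₂) ≤ lamE ↑K₁ + lamE ↑K₂ := by
          apply ENNReal.le_of_forall_pos_le_add
          intro ε hε _
          have hε2 : ((ε : ℝ≥0∞) / 2) ≠ 0 := by
            simp [ENNReal.div_eq_zero_iff, hε.ne']
          obtain ⟨U₁, hU₁, hKU₁, hφ₁⟩ := lamE_lt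
            (ENNReal.lt_add_right (lamE_ne_top ↑K₁) hε2)
          obtain ⟨U₂, hU₂, hKU₂, hφ₂⟩ := lamE_lt
            (ENNReal.lt_add_right (lamE_ne_top ↑K₂) hε2)
          have hsub : lamE (↑K₁ ∪ ↑K₂) ≤ φ U₁ + φ U₂ := by
            refine (lamE_le (hU₁.union hU₂) (Set.union_subset_union hKU₁ hKU₂)).trans ?_
            rw [hφ]
            simp only
            rw [← ulim_add]
            exact ulim_mono fun n => measure_union_le _ _
          calc lamE (↑K₁ ∪ ↑K₂) ≤ φ U₁ + φ U₂ := hsub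
            _ ≤ (lamE ↑K₁ + ε / 2) + (lamE ↑K₂ + ε / 2) := add_le_add hφ₁.le hφ₂.le
            _ = lamE ↑K₁ + lamE ↑K₂ + ε := by
                rw [add_add_add_comm, ENNReal.add_halves]
        show ((lamE _).toNNReal) ≤ (lamE _).toNNReal + (lamE _).toNNReal
        rw [Compacts.coe_sup] at *
        rw [← ENNReal.toNNReal_add (lamE_ne_top _) (lamE_ne_top _)]
        exact ENNReal.toNNReal_mono (by
          exact ENNReal.add_ne_top.2 ⟨lamE_ne_top _, lamE_ne_top _⟩) heq
         } with hΛ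
  have hΛcoe : ∀ K : Compacts (X × Y), (Λ K : ℝ≥0∞) = lamE ↑K := by
    intro K
    show ((lamE ↑K).toNNReal : ℝ≥0∞) = lamE ↑K
    exact ENNReal.coe_toNNReal (lamE_ne_top _)
  set ω : Measure (X × Y) := Λ.measure with hω
  -- upper bound on opens
  have hωopen : ∀ U : Set (X × Y), IsOpen U → ω U ≤ φ U := by
    intro U hU
    rw [hω, Content.measure_apply _ hU.measurableSet]
    have h1 : Λ.outerMeasure U = Λ.innerContent ⟨U, hU⟩ := Content.outerMeasure_opens Λ ⟨U, hU⟩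
    rw [h1, Content.innerContent]
    refine iSup₂_le fun K hK => ?_
    rw [hΛcoe]
    exact lamE_le hU hK
  -- total mass
  have hωuniv : ω Set.univ = 1 := by
    refine le_antisymm ((hωopen _ isOpen_univ).trans hφuniv.le) ?_
    apply ENNReal.le_of_forall_pos_le_add
    intro ε hε _
    have hε2 : ((ε : ℝ≥0∞) / 2) ≠ 0 := by
      simp [ENNReal.div_eq_zero_iff, hε.ne']
    obtain ⟨K, hKc, hKm⟩ := exists_isCompact_measure_compl_le μ hε2
    obtain ⟨K', hKc', hKm'⟩ := exists_isCompact_measure_compl_le ν hε2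
    have hγK : ∀ n, 1 ≤ γseq n (K ×ˢ K') + (ε : ℝ≥0∞) := by
      intro n
      haveI := hγprob n
      have hcompl : γseq n ((K ×ˢ K')ᶜ) ≤ (ε : ℝ≥0∞) := by
        have hsub : (K ×ˢ K')ᶜ ⊆ (Prod.fst ⁻¹' Kᶜ) ∪ (Prod.snd ⁻¹' K'ᶜ) := by
          intro p hp
          by_contra hcon
          simp only [Set.mem_union, Set.mem_preimage, Set.mem_compl_iff, not_or, not_not]
            at hcon
          exact hp ⟨hcon.1, hcon.2⟩
        have h1 : γseq n (Prod.fst ⁻¹' Kᶜ) = μ Kᶜ := by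
          rw [← (hγseqS n).1, Measure.map_apply measurable_fst
            hKc.isClosed.measurableSet.compl]
        have h2 : γseq n (Prod.snd ⁻¹' K'ᶜ) = ν K'ᶜ := by
          rw [← (hγseqS n).2, Measure.map_apply measurable_snd
            hKc'.isClosed.measurableSet.compl]
        calc γseq n ((K ×ˢ K')ᶜ) ≤ γseq n (Prod.fst ⁻¹' Kᶜ) + γseq n (Prod.snd ⁻¹' K'ᶜ) :=
              (measure_mono hsub).trans (measure_union_le _ _)
          _ = μ Kᶜ + ν K'ᶜ := by rw [h1, h2]
          _ ≤ (ε : ℝ≥0∞) / 2 + (ε : ℝ≥0∞) / 2 := add_le_add hKm hKm'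
          _ = (ε : ℝ≥0∞) := ENNReal.add_halves _
      calc (1 : ℝ≥0∞) = γseq n Set.univ := measure_univ.symm
        _ ≤ γseq n (K ×ˢ K') + γseq n ((K ×ˢ K')ᶜ) := by
            rw [← Set.union_compl_self (K ×ˢ K')]
            exact measure_union_le _ _
        _ ≤ γseq n (K ×ˢ K') + (ε : ℝ≥0∞) := add_le_add le_rfl hcompl
    have hφK : 1 ≤ φ (K ×ˢ K') + (ε : ℝ≥0∞) := by
      have : φ (K ×ˢ K') + (ε : ℝ≥0∞)
          = ulim 𝒰 fun n => γseq n (K ×ˢ K') + (ε : ℝ≥0∞) := by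
        rw [hφ]
        simp only
        rw [ulim_add]
        congr 1
        exact (ulim_const 𝒰 _).symm
      rw [this]
      calc (1 : ℝ≥0∞) = ulim 𝒰 (fun _ => (1 : ℝ≥0∞)) := (ulim_const 𝒰 1).symm
        _ ≤ _ := ulim_mono hγK
    have hlamK : 1 - (ε : ℝ≥0∞) ≤ lamE (K ×ˢ K') := by
      apply le_lamE
      intro U hU hKU
      rw [tsub_le_iff_right]
      exact hφK.trans (add_le_add (hφmono hKU) le_rfl)
    have hωK : lamE (K ×ˢ K') ≤ ω Set.univ := by
      rw [hω, Content.measure_apply _ MeasurableSet.univ]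
      have h1 : Λ.outerMeasure Set.univ = Λ.innerContent ⟨Set.univ, isOpen_univ⟩ :=
        Content.outerMeasure_opens Λ ⟨Set.univ, isOpen_univ⟩
      rw [h1, Content.innerContent]
      refine le_trans ?_ (le_iSup₂_of_le ⟨K ×ˢ K', hKc.prod hKc'⟩ (Set.subset_univ _) le_rfl)
      rw [hΛcoe]
      exact le_rfl
    rw [← tsub_le_iff_right ]
    exact le_trans hlamK hωK
  haveI hωprob : IsProbabilityMeasure ω := ⟨hωuniv⟩
  -- marginals
  have hfstω : ω.map Prod.fst = μ := by
    haveI : IsProbabilityMeasure (ω.map Prod.fst) :=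
      Measure.isProbabilityMeasure_map measurable_fst.aemeasurable
    refine measure_eq_of_le_open _ _ ?_ ?_
    · intro U hU
      rw [Measure.map_apply measurable_fst hU.measurableSet]
      refine (hωopen _ (hU.preimage continuous_fst)).trans ?_
      have : ∀ n, γseq n (Prod.fst ⁻¹' U) = μ U := by
        intro n
        rw [← (hγseqS n).1, Measure.map_apply measurable_fst hU.measurableSet]
      rw [hφ]
      simp only
      calc ulim 𝒰 (fun n => γseq n (Prod.fst ⁻¹' U)) = ulim 𝒰 (fun _ => μ U) := by
            congr 1; funext n; exact this n
        _ = μ U := ulim_const 𝒰 _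
        _ ≤ μ U := le_rfl
    · simp [measure_univ]
  have hsndω : ω.map Prod.snd = ν := by
    haveI : IsProbabilityMeasure (ω.map Prod.snd) :=
      Measure.isProbabilityMeasure_map measurable_snd.aemeasurable
    refine measure_eq_of_le_open _ _ ?_ ?_
    · intro U hU
      rw [Measure.map_apply measurable_snd hU.measurableSet]
      refine (hωopen _ (hU.preimage continuous_snd)).trans ?_
      have : ∀ n, γseq n (Prod.snd ⁻¹' U) = ν U := by
        intro n
        rw [← (hγseqS n).2, Measure.map_apply measurable_snd hU.measurableSet]
      rw [hφ]
      simp only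
      calc ulim 𝒰 (fun n => γseq n (Prod.snd ⁻¹' U)) = ulim 𝒰 (fun _ => ν U) := by
            congr 1; funext n; exact this n
        _ = ν U := ulim_const 𝒰 _
        _ ≤ ν U := le_rfl
    · simp [measure_univ]
  have hωS : IsCoupling μ ν ω := ⟨hfstω, hsndω⟩
  -- the cost of ω is at most the optimal cost
  have hulim_cost : ulim 𝒰 (fun n => ∫⁻ p, c p ∂(γseq n)) = MKCost c μ ν :=
    ulim_eq (htendJ.mono_left h𝒰le)
  have hJω : ∫⁻ p, c p ∂ω ≤ MKCost c μ ν := by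
    have hsn : ∀ n, ∫⁻ z, sfun c n z ∂ω ≤ MKCost c μ ν := by
      intro n
      rw [lintegral_sfun hc ω n]
      have step1 : ∑ i ∈ Finset.Icc 1 ((n + 1) * (n + 1)),
          ((n : ℝ≥0∞) + 1)⁻¹ * ω (Uset c n i)
          ≤ ∑ i ∈ Finset.Icc 1 ((n + 1) * (n + 1)),
          ((n : ℝ≥0∞) + 1)⁻¹ * φ (Uset c n i) :=
        Finset.sum_le_sum fun i _ =>
          mul_le_mul_right (hωopen _ (isOpen_Uset hc n i)) _
      have step2 : ∑ i ∈ Finset.Icc 1 ((n + 1) * (n + 1)),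
          ((n : ℝ≥0∞) + 1)⁻¹ * φ (Uset c n i)
          = ulim 𝒰 (fun m => ∫⁻ z, sfun c n z ∂(γseq m)) := by
        have : ∀ i, ((n : ℝ≥0∞) + 1)⁻¹ * φ (Uset c n i)
            = ulim 𝒰 (fun m => ((n : ℝ≥0∞) + 1)⁻¹ * γseq m (Uset c n i)) := by
          intro i
          rw [hφ]
          simp only
          rw [ulim_const_mul 𝒰 (by simp) _]
        rw [Finset.sum_congr rfl fun i _ => this i, ← ulim_finset_sum]
        congr 1
        funext m
        rw [lintegral_sfun hc (γseq m) n]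
      have step3 : ulim 𝒰 (fun m => ∫⁻ z, sfun c n z ∂(γseq m)) ≤ MKCost c μ ν := by
        rw [← hulim_cost]
        exact ulim_mono fun m => lintegral_mono fun z => sfun_le n z
      exact le_trans step1 (step2 ▸ step3)
    calc ∫⁻ p, c p ∂ω ≤ ∫⁻ p, liminf (fun n => sfun c n p) atTop ∂ω :=
          lintegral_mono fun z => le_liminf_sfun z
      _ ≤ liminf (fun n => ∫⁻ p, sfun c n p ∂ω) atTop :=
          lintegral_liminf_le fun n => measurable_sfun hc n
      _ ≤ liminf (fun _ => MKCost c μ ν) atTop := liminf_le_liminf (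
          Filter.Eventually.of_forall hsn)
      _ = MKCost c μ ν := liminf_const _
  refine ⟨ω, hωS, le_antisymm hJω ?_⟩
  exact iInf₂_le ω hωS

end UOCAux
end

end UOCAuxSect

/-- If every optimal coupling of `μ` and `ν` for the l.s.c. cost `c` is supported by the graph
of a measurable map over the support of `μ`, then there is a unique optimal coupling `γ`,
and a (μ-a.e.) unique measurable map `T` with `γ = (Id × T)_* μ`. -/
theorem unique_optimal_coupling_of_graph_support
    {X Y : Type*} [MeasurableSpace X] [TopologicalSpace X] [PolishSpace X] [BorelSpace X]
    [MeasurableSpace Y] [TopologicalSpace Y] [PolishSpace Y] [BorelSpace Y]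
    (c : X × Y → ℝ≥0∞) (hc : LowerSemicontinuous c)
    (μ : Measure X) (ν : Measure Y)
    [IsProbabilityMeasure μ] [IsProbabilityMeasure ν]
    (hgraph : ∀ γ : Measure (X × Y), IsOptimalCoupling c μ ν γ →
      ∃ T : X → Y, Measurable T ∧
        msupport γ ⊆ {p : X × Y | ∃ x ∈ msupport μ, p = (x, T x)}) :
    ∃ (γ : Measure (X × Y)) (T : X → Y),
      IsOptimalCoupling c μ ν γ ∧ Measurable T ∧
      γ = μ.map (fun x => (x, T x)) ∧
      (∀ γ' : Measure (X × Y), IsOptimalCoupling c μ ν γ' → γ' = γ) ∧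
      (∀ T' : X → Y, Measurable T' → γ = μ.map (fun x => (x, T' x)) → T' =ᵐ[μ] T) := by
  classical
  obtain ⟨ω, hopt⟩ := UOCAux.exists_optimal_coupling c hc μ ν
  haveI hωprob : IsProbabilityMeasure ω := UOCAux.isProbabilityMeasure_of_coupling hopt.1
  -- bad sets relative to a map are null for graph-supported couplings
  have hbad_null : ∀ (ρ : Measure (X × Y)) (T : X → Y),
      msupport ρ ⊆ {p : X × Y | ∃ x ∈ msupport μ, p = (x, T x)} →
      ρ {p : X × Y | p.2 ≠ T p.1} = 0 := by
    intro ρ T hsupp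
    refine measure_mono_null ?_ (UOCAux.measure_msupport_compl ρ)
    intro p hp
    simp only [Set.mem_compl_iff]
    intro hmem
    obtain ⟨x, -, hx⟩ := hsupp hmem
    apply hp
    rw [hx]
  obtain ⟨T, hT, hTsupp⟩ := hgraph ω hopt
  have hωbad : ω {p : X × Y | p.2 ≠ T p.1} = 0 := hbad_null ω T hTsupp
  have hωmap : ω = μ.map (fun x => (x, T x)) := UOCAux.eq_map_of_graph hopt.1.1 hT hωbad
  refine ⟨ω, T, hopt, hT, hωmap, ?_, ?_⟩
  · -- uniqueness of the optimal coupling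
    intro γ' hγ'
    haveI : IsProbabilityMeasure γ' := UOCAux.isProbabilityMeasure_of_coupling hγ'.1
    set γm : Measure (X × Y) := (2⁻¹ : ℝ≥0∞) • γ' + (2⁻¹ : ℝ≥0∞) • ω with hγm
    have hγmS : IsCoupling μ ν γm := by
      constructor
      · rw [hγm, Measure.map_add _ _ measurable_fst, Measure.map_smul, Measure.map_smul,
          hγ'.1.1, hopt.1.1, ← add_smul, ENNReal.inv_two_add_inv_two, one_smul]
      · rw [hγm, Measure.map_add _ _ measurable_snd, Measure.map_smul, Measure.map_smul,
          hγ'.1.2, hopt.1.2, ← add_smul, ENNReal.inv_two_add_inv_two, one_smul]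
    have hγmJ : ∫⁻ p, c p ∂γm = MKCost c μ ν := by
      rw [hγm, lintegral_add_measure, lintegral_smul_measure, lintegral_smul_measure,
        hγ'.2, hopt.2, smul_eq_mul, ← add_mul, ENNReal.inv_two_add_inv_two, one_mul]
    have hγmopt : IsOptimalCoupling c μ ν γm := ⟨hγmS, hγmJ⟩
    obtain ⟨T'', hT'', hsupp''⟩ := hgraph γm hγmopt
    have hγmbad : γm {p : X × Y | p.2 ≠ T'' p.1} = 0 := hbad_null γm T'' hsupp''
    have hγ'bad : γ' {p : X × Y | p.2 ≠ T'' p.1} = 0 ∧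
        ω {p : X × Y | p.2 ≠ T'' p.1} = 0 := by
      have h1 : (2⁻¹ : ℝ≥0∞) * γ' {p : X × Y | p.2 ≠ T'' p.1}
          + (2⁻¹ : ℝ≥0∞) * ω {p : X × Y | p.2 ≠ T'' p.1} = 0 := by
        calc (2⁻¹ : ℝ≥0∞) * γ' {p : X × Y | p.2 ≠ T'' p.1}
            + (2⁻¹ : ℝ≥0∞) * ω {p : X × Y | p.2 ≠ T'' p.1}
            = γm {p : X × Y | p.2 ≠ T'' p.1} := by
              rw [hγm, Measure.add_apply, Measure.smul_apply, Measure.smul_apply,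
                smul_eq_mul, smul_eq_mul]
          _ = 0 := hγmbad
      rw [add_eq_zero] at h1
      constructor
      · have := h1.1
        rwa [mul_eq_zero, or_iff_right (by norm_num : (2⁻¹ : ℝ≥0∞) ≠ 0)] at this
      · have := h1.2
        rwa [mul_eq_zero, or_iff_right (by norm_num : (2⁻¹ : ℝ≥0∞) ≠ 0)] at this
    have e1 : γ' = μ.map (fun x => (x, T'' x)) :=
      UOCAux.eq_map_of_graph hγ'.1.1 hT'' hγ'bad.1
    have e2 : ω = μ.map (fun x => (x, T'' x)) :=
      UOCAux.eq_map_of_graph hopt.1.1 hT'' hγ'bad.2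
    rw [e1, ← e2]
  · -- a.e. uniqueness of the map
    intro T' hT' hmap'
    have hD : MeasurableSet {p : X × Y | p.2 = T p.1} := by
      have hm : Measurable fun p : X × Y => (p.2, T p.1) :=
        measurable_snd.prodMk (hT.comp measurable_fst)
      exact hm isClosed_diagonal.measurableSet
    have hpair : Measurable fun x : X => (x, T x) := measurable_id.prodMk hT
    have hpair' : Measurable fun x : X => (x, T' x) := measurable_id.prodMk hT'
    have h1 : μ {x : X | T' x = T x} = 1 := by
      have e1 : (μ.map (fun x => (x, T' x))) {p : X × Y | p.2 = T p.1}
          = μ {x : X | T' x = T x} := by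
        rw [Measure.map_apply hpair' hD]
        rfl
      have e2 : (μ.map (fun x => (x, T x))) {p : X × Y | p.2 = T p.1} = 1 := by
        rw [Measure.map_apply hpair hD]
        have : (fun x : X => (x, T x)) ⁻¹' {p : X × Y | p.2 = T p.1} = Set.univ := by
          ext x; simp
        rw [this, measure_univ]
      rw [← e1, ← hmap', hωmap, e2]
    have hTT' : MeasurableSet {x : X | T' x = T x} := by
      have hm : Measurable fun x : X => (T' x, T x) := hT'.prodMk hT
      exact hm isClosed_diagonal.measurableSet
    rw [Filter.EventuallyEq, ae_iff]
    have : {x : X | ¬ T' x = T x} = {x : X | T' x = T x}ᶜ := rfl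
    rw [this, measure_compl hTT' (measure_ne_top μ _), h1, measure_univ, tsub_self]

end
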